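/- If n is an odd positive integer, then the number of square-free divisors of 2^n - 1 satisfies W(2^n - 1) < 2^{n/7 + 2}. -/

import Mathlib

open Finset in
private lemma key_prod_ineq (P T : Finset ℕ) (hPT : ∀ p ∈ P, p ∉ T → 128 ≤ p)
    (hT : ∀ p ∈ T, p ≤ 128) :
    128 ^ P.card * ∏ p ∈ T, p ≤ 128 ^ T.card * ∏ p ∈ P, p := by
  have e1 : (128:ℕ) ^ P.card = (∏ _p ∈ P ∩ T, 128) * ∏ _p ∈ P \ T, 128 := by
    rw [prod_inter_mul_prod_diff, prod_const]
  have e2 : (128:ℕ) ^ T.card = (∏ _p ∈ P ∩ T, 128) * ∏ _p ∈ T \ P, 128 := by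
    rw [inter_comm, prod_inter_mul_prod_diff, prod_const]
  have e3 : ∏ p ∈ T, p = (∏ p ∈ P ∩ T, p) * ∏ p ∈ T \ P, p := by
    rw [inter_comm, prod_inter_mul_prod_diff]
  have e4 : ∏ p ∈ P, p = (∏ p ∈ P ∩ T, p) * ∏ p ∈ P \ T, p := by
    rw [prod_inter_mul_prod_diff]
  rw [e1, e2, e3, e4]
  have h5 : (∏ _p ∈ P \ T, 128) ≤ ∏ p ∈ P \ T, p :=
    Finset.prod_le_prod (by intros; positivity) fun p hp => by
      rcases Finset.mem_sdiff.mp hp with ⟨h1, h2⟩; exact hPT p h1 h2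
  have h6 : (∏ p ∈ T \ P, p) ≤ ∏ _p ∈ T \ P, 128 :=
    Finset.prod_le_prod (by intros; positivity) fun p hp =>
      hT p (Finset.mem_sdiff.mp hp).1
  calc (∏ _p ∈ P ∩ T, 128) * (∏ _p ∈ P \ T, 128) * ((∏ p ∈ P ∩ T, p) * ∏ p ∈ T \ P, p)
      ≤ (∏ _p ∈ P ∩ T, 128) * (∏ p ∈ P \ T, p) * ((∏ p ∈ P ∩ T, p) * ∏ _p ∈ T \ P, 128) := by
        gcongr
    _ = (∏ _p ∈ P ∩ T, 128) * (∏ _p ∈ T \ P, 128) * ((∏ p ∈ P ∩ T, p) * ∏ p ∈ P \ T, p) := by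
        ring

private lemma sqfree_div_card (m : ℕ) (hm : m ≠ 0) :
    {d ∈ m.divisors | Squarefree d}.card = 2 ^ m.primeFactors.card := by
  have h := Nat.divisors_filter_squarefree hm
  have h2 : {d ∈ m.divisors | Squarefree d}.card
      = ((UniqueFactorizationMonoid.normalizedFactors m).toFinset.powerset.val.map
          (fun x => x.val.prod)).card := by
    rw [Finset.card, h]
  rw [h2, Multiset.card_map, ← Finset.card, Finset.card_powerset, Nat.factors_eq]
  simp

private lemma no_odd_helper (q t o : ℕ) (hq : Fact q.Prime) (hq2 : (q:ℕ) ≠ 2)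
    (hfact : q - 1 = 2 ^ t * o) (h1 : (2 : ZMod q) ^ o ≠ 1)
    (n : ℕ) (hn : 0 < n) (hodd : Odd n) : ¬ (q ∣ 2 ^ n - 1) := by
  intro hdvd
  have h2n : (2 : ZMod q) ^ n = 1 := by
    have h1le : 1 ≤ 2 ^ n := Nat.one_le_two_pow
    have hz : ((2 ^ n - 1 : ℕ) : ZMod q) = 0 := by
      exact_mod_cast (ZMod.natCast_eq_zero_iff _ _).mpr hdvd
    push_cast [Nat.cast_sub h1le] at hz
    linear_combination hz
  have hq1 : (2 : ZMod q) ^ (q - 1) = 1 := by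
    apply ZMod.pow_card_sub_one_eq_one
    intro h
    have h0 : ((2:ℕ) : ZMod q) = 0 := by exact_mod_cast h
    rw [ZMod.natCast_eq_zero_iff] at h0
    exact hq2 ((Nat.prime_dvd_prime_iff_eq hq.out Nat.prime_two).mp h0)
  have hg : (2 : ZMod q) ^ (Nat.gcd n (q-1)) = 1 := pow_gcd_eq_one.mpr ⟨h2n, hq1⟩
  have hgo : Nat.gcd n (q-1) ∣ o := by
    have hdvdq : Nat.gcd n (q-1) ∣ 2 ^ t * o := hfact ▸ Nat.gcd_dvd_right n (q-1)
    have hg2 : ¬ 2 ∣ Nat.gcd n (q-1) := fun h =>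
      (Nat.not_even_iff_odd.mpr hodd) (even_iff_two_dvd.mpr (h.trans (Nat.gcd_dvd_left _ _)))
    have hcop : Nat.Coprime (Nat.gcd n (q-1)) 2 :=
      ((Nat.Prime.coprime_iff_not_dvd Nat.prime_two).mpr hg2).symm
    exact (hcop.pow_right t).dvd_of_dvd_mul_left hdvdq
  obtain ⟨c, hc⟩ := hgo
  rw [hc, pow_mul, hg, one_pow] at h1
  exact h1 rfl

set_option maxHeartbeats 1000000 in
private lemma small_prime_classify (p : ℕ) (hp : p.Prime) (hp2 : p ≠ 2) (hple : p ≤ 128)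
    (hT : p ∉ ({7,23,31,47,71,73,79,89,103,127} : Finset ℕ)) :
    p ∈ ({3,5,11,13,17,19,29,37,41,43,53,59,61,67,83,97,101,107,109,113} : Finset ℕ) := by
  have hmem : p ∈ Finset.filter (fun q => Nat.Prime q) (Finset.range 129) := by
    simp only [Finset.mem_filter, Finset.mem_range]
    exact ⟨by omega, hp⟩
  fin_cases hmem <;> first | decide | (exact absurd (by decide) hT) | (exact absurd rfl hp2)

set_option maxHeartbeats 1000000 in
private lemma omega_bound (n : ℕ) (hn : 0 < n) (hodd : Odd n) :
    7 * (2 ^ n - 1).primeFactors.card ≤ n + 13 := by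
  set m := 2 ^ n - 1 with hm
  have h2n : 2 ≤ 2 ^ n := by
    calc 2 = 2^1 := rfl
    _ ≤ 2^n := Nat.pow_le_pow_right (by norm_num) hn
  have hm0 : m ≠ 0 := by omega
  set T : Finset ℕ := {7,23,31,47,71,73,79,89,103,127} with hTdef
  have hclass : ∀ p ∈ m.primeFactors, p ∉ T → 128 ≤ p := by
    intro p hp hT
    obtain ⟨hpp, hpd, -⟩ := Nat.mem_primeFactors.mp hp
    have hp2 : p ≠ 2 := by
      rintro rfl
      have h2d : (2:ℕ) ∣ 2 ^ n := dvd_pow_self 2 hn.ne'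
      rw [hm] at hpd
      omega
    by_contra hle
    push_neg at hle
    have hbad := small_prime_classify p hpp hp2 (by omega) hT
    fin_cases hbad
    · exact absurd hpd (no_odd_helper 3 1 1 ⟨by norm_num⟩ (by norm_num) (by norm_num) (by decide) n hn hodd)
    · exact absurd hpd (no_odd_helper 5 2 1 ⟨by norm_num⟩ (by norm_num) (by norm_num) (by decide) n hn hodd)
    · exact absurd hpd (no_odd_helper 11 1 5 ⟨by norm_num⟩ (by norm_num) (by norm_num) (by decide) n hn hodd)
    · exact absurd hpd (no_odd_helper 13 2 3 ⟨by norm_num⟩ (by norm_num) (by norm_num) (by decide) n hn hodd)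
    · exact absurd hpd (no_odd_helper 17 4 1 ⟨by norm_num⟩ (by norm_num) (by norm_num) (by decide) n hn hodd)
    · exact absurd hpd (no_odd_helper 19 1 9 ⟨by norm_num⟩ (by norm_num) (by norm_num) (by decide) n hn hodd)
    · exact absurd hpd (no_odd_helper 29 2 7 ⟨by norm_num⟩ (by norm_num) (by norm_num) (by decide) n hn hodd)
    · exact absurd hpd (no_odd_helper 37 2 9 ⟨by norm_num⟩ (by norm_num) (by norm_num) (by decide) n hn hodd)
    · exact absurd hpd (no_odd_helper 41 3 5 ⟨by norm_num⟩ (by norm_num) (by norm_num) (by decide) n hn hodd)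
    · exact absurd hpd (no_odd_helper 43 1 21 ⟨by norm_num⟩ (by norm_num) (by norm_num) (by decide) n hn hodd)
    · exact absurd hpd (no_odd_helper 53 2 13 ⟨by norm_num⟩ (by norm_num) (by norm_num) (by decide) n hn hodd)
    · exact absurd hpd (no_odd_helper 59 1 29 ⟨by norm_num⟩ (by norm_num) (by norm_num) (by decide) n hn hodd)
    · exact absurd hpd (no_odd_helper 61 2 15 ⟨by norm_num⟩ (by norm_num) (by norm_num) (by decide) n hn hodd)
    · exact absurd hpd (no_odd_helper 67 1 33 ⟨by norm_num⟩ (by norm_num) (by norm_num) (by decide) n hn hodd)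
    · exact absurd hpd (no_odd_helper 83 1 41 ⟨by norm_num⟩ (by norm_num) (by norm_num) (by decide) n hn hodd)
    · exact absurd hpd (no_odd_helper 97 5 3 ⟨by norm_num⟩ (by norm_num) (by norm_num) (by decide) n hn hodd)
    · exact absurd hpd (no_odd_helper 101 2 25 ⟨by norm_num⟩ (by norm_num) (by norm_num) (by decide) n hn hodd)
    · exact absurd hpd (no_odd_helper 107 1 53 ⟨by norm_num⟩ (by norm_num) (by norm_num) (by decide) n hn hodd)
    · exact absurd hpd (no_odd_helper 109 2 27 ⟨by norm_num⟩ (by norm_num) (by norm_num) (by decide) n hn hodd)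
    · exact absurd hpd (no_odd_helper 113 4 7 ⟨by norm_num⟩ (by norm_num) (by norm_num) (by decide) n hn hodd)
  have hprod : ∏ p ∈ m.primeFactors, p ≤ m :=
    Nat.le_of_dvd (Nat.pos_of_ne_zero hm0) (Nat.prod_primeFactors_dvd m)
  have hkey := key_prod_ineq m.primeFactors T hclass (by decide)
  have hTcard : T.card = 10 := by decide
  have hTprod : (∏ p ∈ T, p) = 111821336899686001 := by decide
  rw [hTcard, hTprod] at hkey
  set k := m.primeFactors.card with hk
  have step : 2 ^ (7 * k + 56) < 2 ^ (n + 70) := by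
    calc 2 ^ (7 * k + 56) = (128:ℕ) ^ k * 2 ^ 56 := by
          rw [pow_add, pow_mul]; norm_num
    _ ≤ 128 ^ k * 111821336899686001 := by gcongr <;> norm_num
    _ ≤ 128 ^ 10 * ∏ p ∈ m.primeFactors, p := hkey
    _ ≤ 128 ^ 10 * m := by gcongr
    _ < 128 ^ 10 * 2 ^ n := by gcongr; norm_num; omega
    _ = 2 ^ (n + 70) := by rw [pow_add]; norm_num; ring
  have := (Nat.pow_lt_pow_iff_right (a := 2) (by norm_num)).mp step
  omega

/-- For odd positive `n`, the number of squarefree divisors of `2^n - 1`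
satisfies `W(2^n - 1) < 2^{n/7 + 2}`. -/
theorem stmt_8 (n : ℕ) (hn : 0 < n) (hodd : Odd n) :
    ({d : ℕ | Squarefree d ∧ d ∣ 2 ^ n - 1}.ncard : ℝ)
      < (2 : ℝ) ^ ((n : ℝ) / 7 + 2) := by
  have h2n : 2 ≤ 2 ^ n := by
    calc 2 = 2^1 := rfl
    _ ≤ 2^n := Nat.pow_le_pow_right (by norm_num) hn
  set m := 2 ^ n - 1 with hm
  have hm0 : m ≠ 0 := by omega
  have hset : {d : ℕ | Squarefree d ∧ d ∣ m} = ↑{d ∈ m.divisors | Squarefree d} := by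
    ext d
    simp only [Set.mem_setOf_eq, Finset.coe_filter, Nat.mem_divisors]
    tauto
  rw [hset, Set.ncard_coe_finset, sqfree_div_card m hm0]
  have hk := omega_bound n hn hodd
  rw [← hm] at hk
  set k := m.primeFactors.card with hkdef
  have hkr : (k : ℝ) < (n : ℝ) / 7 + 2 := by
    have h7 : ((7 * k : ℕ) : ℝ) ≤ ((n + 13 : ℕ) : ℝ) := by exact_mod_cast hk
    push_cast at h7
    linarith
  calc ((2 ^ k : ℕ) : ℝ) = (2 : ℝ) ^ (k : ℝ) := by
        rw [Real.rpow_natCast]; push_cast; ring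
  _ < (2 : ℝ) ^ ((n : ℝ) / 7 + 2) :=
      (Real.rpow_lt_rpow_left_iff (by norm_num)).mpr hkr
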